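/- The series ∑_{n≥1} (-1)^{n-1}·4/((2n-1)⁵ + 4(2n-1)) converges to π/4; equivalently π/4 = 4/(1⁵+4) - 4/(3⁵+12) + 4/(5⁵+20) - ⋯. -/

import Mathlib

open Filter Finset Real

lemma madhava_key (N : ℕ) : ∑ n ∈ Finset.Icc 1 N,
    (-1 : ℝ) ^ (n - 1) * 4 / ((2 * (n : ℝ) - 1) ^ 5 + 4 * (2 * (n : ℝ) - 1)) =
    (∑ n ∈ Finset.Icc 1 N, (-1 : ℝ) ^ (n - 1) / (2 * (n : ℝ) - 1))
      + (-1 : ℝ) ^ N * N / (4 * (N : ℝ) ^ 2 + 1) := by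
  induction N with
  | zero => simp
  | succ N ih =>
    rw [Finset.sum_Icc_succ_top (by omega), Finset.sum_Icc_succ_top (by omega), ih]
    have hx : (0:ℝ) ≤ (N:ℝ) := Nat.cast_nonneg N
    have key : (4:ℝ) / ((2*(N:ℝ)+1)^5 + 4*(2*(N:ℝ)+1)) =
        1/(2*(N:ℝ)+1) - ((N:ℝ)+1)/(4*((N:ℝ)+1)^2+1) - (N:ℝ)/(4*(N:ℝ)^2+1) := by
      have h1 : (0:ℝ) < (2*(N:ℝ)+1)^5 + 4*(2*(N:ℝ)+1) := by positivity
      have h2 : (0:ℝ) < 2*(N:ℝ)+1 := by positivity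
      have h3 : (0:ℝ) < 4*(N:ℝ)^2+1 := by positivity
      have h4 : (0:ℝ) < 4*((N:ℝ)+1)^2+1 := by positivity
      field_simp
      ring
    simp only [Nat.add_sub_cancel, pow_succ]
    push_cast
    linear_combination ((-1:ℝ)^N) * key

theorem madhava_series_second_correction :
    Tendsto (fun N : ℕ => ∑ n ∈ Finset.Icc 1 N,
        (-1 : ℝ) ^ (n - 1) * 4 / ((2 * (n : ℝ) - 1) ^ 5 + 4 * (2 * (n : ℝ) - 1)))
      atTop (nhds (π / 4)) := by
  have hL : Tendsto (fun N : ℕ => ∑ n ∈ Finset.Icc 1 N,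
      (-1 : ℝ) ^ (n - 1) / (2 * (n : ℝ) - 1)) atTop (nhds (π / 4)) := by
    have := Real.tendsto_sum_pi_div_four
    refine this.congr fun N => ?_
    rw [← Finset.Ico_add_one_right_eq_Icc, Finset.sum_Ico_eq_sum_range]
    refine Finset.sum_congr (by simp) fun i _ => ?_
    rw [show 1 + i - 1 = i from by omega]
    push_cast
    ring_nf
  have hC : Tendsto (fun N : ℕ => (-1 : ℝ) ^ N * N / (4 * (N : ℝ) ^ 2 + 1))
      atTop (nhds 0) := by
    have hb : ∀ N : ℕ, ‖(-1 : ℝ) ^ N * N / (4 * (N : ℝ) ^ 2 + 1)‖ ≤ 1 / (N : ℝ) := by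
      intro N
      rw [Real.norm_eq_abs]
      rcases Nat.eq_zero_or_pos N with h | h
      · subst h; simp
      · have hN : (0:ℝ) < N := by exact_mod_cast h
        rw [abs_div, abs_mul, abs_pow, abs_neg, abs_one, one_pow, one_mul,
          abs_of_nonneg (by positivity : (0:ℝ) ≤ (N:ℝ)),
          abs_of_pos (by positivity : (0:ℝ) < 4 * (N:ℝ)^2 + 1)]
        rw [div_le_div_iff₀ (by positivity) hN]
        nlinarith
    exact squeeze_zero_norm hb tendsto_one_div_atTop_nhds_zero_nat
  have := hL.add hC
  rw [add_zero] at this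
  refine this.congr fun N => ?_
  rw [madhava_key]
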